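/- Let (A,B) be controllable with B = Q₁R of full column rank (Q = [Q₁ Q₂] orthogonal). Suppose X_k ∈ ℝ^{n×k} has orthonormal columns and T_k ∈ ℝ^{k×k} satisfies Q₂ᵀ A X_k = Q₂ᵀ X_k T_k, with k < n. Then for any λ ∈ ℝ, the matrix M = [[Q₂ᵀ(A - λIₙ), -Q₂ᵀX_k],[X_kᵀ, 0]] ∈ ℝ^{(n-m+k)×(n+k)} has full row rank; equivalently, dim N(M) = m. -/

import Mathlib

open Matrix

lemma vecMul_eq_zero_of_rank_rows {n : ℕ} {ι : Type*} [Fintype ι] [DecidableEq ι]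
    (C : Matrix (Fin n) ι ℝ) (hC : C.rank = n) (w : Fin n → ℝ)
    (hw : w ᵥ* C = 0) : w = 0 := by
  have hsurj : Function.Surjective C.mulVecLin := by
    rw [← LinearMap.range_eq_top]
    apply Submodule.eq_top_of_finrank_eq
    rw [Module.finrank_fintype_fun_eq_card, Fintype.card_fin]
    exact hC
  obtain ⟨x, hx⟩ := hsurj w
  simp only [Matrix.mulVecLin_apply] at hx
  have h := Matrix.dotProduct_mulVec w C x
  rw [hw, hx, zero_dotProduct] at h
  exact dotProduct_self_eq_zero.mp h

/-- Full row rank of the bordered matrix `M = [[Q₂ᵀ(A-λI), -Q₂ᵀX_k],[X_kᵀ, 0]]`. -/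
theorem stmt5 (n m p k : ℕ) (hmp : m + p = n) (hk : k < n)
    (A : Matrix (Fin n) (Fin n) ℝ) (B : Matrix (Fin n) (Fin m) ℝ)
    (hctrb : (Matrix.of fun (i : Fin n) (q : Fin n × Fin m) =>
      (A ^ (q.1 : ℕ) * B) i q.2).rank = n)
    (Q₁ : Matrix (Fin n) (Fin m) ℝ) (Q₂ : Matrix (Fin n) (Fin p) ℝ)
    (R : Matrix (Fin m) (Fin m) ℝ) (hR : IsUnit R.det)
    (hQ : (Matrix.fromCols Q₁ Q₂)ᵀ * Matrix.fromCols Q₁ Q₂ = 1)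
    (hB : B = Q₁ * R)
    (X : Matrix (Fin n) (Fin k) ℝ) (hX : Xᵀ * X = 1)
    (T : Matrix (Fin k) (Fin k) ℝ) (hT : Q₂ᵀ * A * X = Q₂ᵀ * X * T)
    (lam : ℝ) :
    (Matrix.fromBlocks (Q₂ᵀ * (A - lam • 1)) (-(Q₂ᵀ * X)) Xᵀ 0).rank = p + k := by
  -- extract orthogonality relations from hQ
  rw [Matrix.transpose_fromCols, Matrix.fromRows_mul_fromCols,
    ← Matrix.fromBlocks_one] at hQ
  obtain ⟨-, -, hQ21, hQ22⟩ := Matrix.fromBlocks_inj.mp hQ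
  -- hQ21 : Q₂ᵀ * Q₁ = 0, hQ22 : Q₂ᵀ * Q₂ = 1
  set M := Matrix.fromBlocks (Q₂ᵀ * (A - lam • 1)) (-(Q₂ᵀ * X)) Xᵀ
      (0 : Matrix (Fin k) (Fin k) ℝ) with hM
  -- key: Mᵀ has trivial kernel
  have hker : ∀ y : Fin p ⊕ Fin k → ℝ, Mᵀ *ᵥ y = 0 → y = 0 := by
    intro y hy
    rw [Matrix.mulVec_transpose] at hy
    set u : Fin p → ℝ := y ∘ Sum.inl with hu
    set v : Fin k → ℝ := y ∘ Sum.inr with hv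
    rw [hM, Matrix.vecMul_fromBlocks] at hy
    have h1 : u ᵥ* (Q₂ᵀ * (A - lam • 1)) + v ᵥ* Xᵀ = 0 := by
      funext j; exact congrFun hy (Sum.inl j)
    have h2 : u ᵥ* (Q₂ᵀ * X) = 0 := by
      funext j
      have h := congrFun hy (Sum.inr j)
      simp only [Sum.elim_inr, Matrix.vecMul_neg, Matrix.vecMul_zero, Pi.add_apply,
        Pi.neg_apply, Pi.zero_apply, add_zero, neg_eq_zero] at h
      exact h
    set w : Fin n → ℝ := u ᵥ* Q₂ᵀ with hw
    have hwX : w ᵥ* X = 0 := by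
      rw [hw, Matrix.vecMul_vecMul]; exact h2
    have hwAX : (w ᵥ* A) ᵥ* X = 0 :=
      calc (w ᵥ* A) ᵥ* X = w ᵥ* (A * X) := Matrix.vecMul_vecMul w A X
        _ = (u ᵥ* Q₂ᵀ) ᵥ* (A * X) := by rw [hw]
        _ = u ᵥ* (Q₂ᵀ * (A * X)) := Matrix.vecMul_vecMul u Q₂ᵀ (A * X)
        _ = u ᵥ* (Q₂ᵀ * A * X) := by rw [Matrix.mul_assoc]
        _ = u ᵥ* (Q₂ᵀ * X * T) := by rw [hT]
        _ = (u ᵥ* (Q₂ᵀ * X)) ᵥ* T := (Matrix.vecMul_vecMul u (Q₂ᵀ * X) T).symm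
        _ = (0 : Fin k → ℝ) ᵥ* T := by rw [h2]
        _ = 0 := Matrix.zero_vecMul T
    -- expand h1
    have h1' : w ᵥ* A - lam • w + v ᵥ* Xᵀ = 0 := by
      have e : u ᵥ* (Q₂ᵀ * (A - lam • 1)) = w ᵥ* A - lam • w := by
        rw [hw, Matrix.vecMul_vecMul, Matrix.mul_sub, Matrix.vecMul_sub]
        congr 1
        rw [Matrix.mul_smul, Matrix.mul_one]
        ext i
        simp [Matrix.vecMul, dotProduct, Finset.mul_sum, mul_comm, mul_assoc]
      rw [e] at h1
      exact h1
    -- step 1: v = 0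
    have hv0 : v = 0 := by
      have h3 := congrArg (fun z => z ᵥ* X) h1'
      simp only [Matrix.add_vecMul, Matrix.sub_vecMul, Matrix.zero_vecMul] at h3
      rw [hwAX, Matrix.smul_vecMul, hwX, Matrix.vecMul_vecMul, hX, Matrix.vecMul_one]
        at h3
      simpa using h3
    -- step 2: w is a left eigenvector
    have heig : w ᵥ* A = lam • w := by
      have h4 := h1'
      rw [hv0, Matrix.zero_vecMul, add_zero, sub_eq_zero] at h4
      exact h4
    have hpow : ∀ j : ℕ, w ᵥ* (A ^ j) = lam ^ j • w := by
      intro j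
      induction j with
      | zero => simp
      | succ j ih =>
        rw [pow_succ, ← Matrix.vecMul_vecMul, ih, Matrix.smul_vecMul, heig,
          smul_smul, pow_succ]
    have hwB : w ᵥ* B = 0 := by
      rw [hB, hw, Matrix.vecMul_vecMul, ← Matrix.mul_assoc, hQ21, Matrix.zero_mul,
        Matrix.vecMul_zero]
    -- w annihilates the controllability matrix
    have hwC : w ᵥ* (Matrix.of fun (i : Fin n) (q : Fin n × Fin m) =>
        (A ^ (q.1 : ℕ) * B) i q.2) = 0 := by
      funext q
      have hz : w ᵥ* (A ^ (q.1 : ℕ) * B) = 0 := by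
        rw [← Matrix.vecMul_vecMul, hpow, Matrix.smul_vecMul, hwB, smul_zero]
      calc (w ᵥ* (Matrix.of fun (i : Fin n) (q : Fin n × Fin m) =>
            (A ^ (q.1 : ℕ) * B) i q.2)) q
          = (w ᵥ* (A ^ (q.1 : ℕ) * B)) q.2 := by
            simp [Matrix.vecMul, dotProduct]
        _ = 0 := by rw [hz]; rfl
    have hw0 : w = 0 := vecMul_eq_zero_of_rank_rows _ hctrb w hwC
    -- step 3: u = 0
    have hu0 : u = 0 := by
      have h5 : u ᵥ* (Q₂ᵀ * Q₂) = 0 := by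
        rw [← Matrix.vecMul_vecMul, ← hw, hw0, Matrix.zero_vecMul]
      rwa [hQ22, Matrix.vecMul_one] at h5
    funext i
    cases i with
    | inl a => exact congrFun hu0 a
    | inr b => exact congrFun hv0 b
  -- conclude the rank computation
  have hinj : Function.Injective (Mᵀ).mulVecLin := by
    rw [← LinearMap.ker_eq_bot, LinearMap.ker_eq_bot']
    intro y hy
    exact hker y (by simpa only [Matrix.mulVecLin_apply] using hy)
  have hrt : (Mᵀ).rank = p + k := by
    have h := LinearMap.finrank_range_of_inj hinj
    unfold Matrix.rank
    rw [h, Module.finrank_fintype_fun_eq_card, Fintype.card_sum, Fintype.card_fin,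
      Fintype.card_fin]
  rw [← Matrix.rank_transpose M]
  exact hrt
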